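/- Let s be a rational number and let r > 0 be a real number with r^2 rational. If J_s(r) ≠ 0, then r · J_{s+1}(r) / J_s(r) is irrational. -/

import Mathlib

/-- `1/Γ(x) = x/Γ(x+1)` for all real `x` (both sides 0 at poles). -/
lemma one_div_Gamma_eq (x : ℝ) : 1 / Real.Gamma x = x / Real.Gamma (x + 1) := by
  rcases eq_or_ne (Real.Gamma x) 0 with h | h
  · rw [h]
    obtain ⟨m, rfl⟩ := (Real.Gamma_eq_zero_iff x).mp h
    rcases Nat.eq_zero_or_pos m with hm | hm
    · simp [hm]
    · have : Real.Gamma (-(m:ℝ) + 1) = 0 := by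
        rw [Real.Gamma_eq_zero_iff]
        exact ⟨m - 1, by push_cast [Nat.cast_sub hm]; ring⟩
      rw [this]; simp
  · have hx : x ≠ 0 := by
      rintro rfl
      exact h ((Real.Gamma_eq_zero_iff 0).mpr ⟨0, by simp⟩)
    rw [Real.Gamma_add_one hx, div_mul_eq_div_div, div_self hx]

/-- `Γ(x) * m! ≤ Γ(x + m)` for `x ≥ 1`. -/
lemma Gamma_mul_factorial_le (x : ℝ) (hx : 1 ≤ x) (m : ℕ) :
    Real.Gamma x * m.factorial ≤ Real.Gamma (x + m) := by
  induction m with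
  | zero => simp
  | succ m ih =>
    have hxm : (0:ℝ) < x + m := by positivity
    have h1 : Real.Gamma (x + (m+1 : ℕ)) = (x + m) * Real.Gamma (x + m) := by
      have : x + ((m:ℝ)+1) = (x + m) + 1 := by ring
      push_cast
      rw [this, Real.Gamma_add_one hxm.ne']
    rw [h1]
    have h2 : Real.Gamma x * ((m+1).factorial : ℝ) = ((m:ℝ)+1) * (Real.Gamma x * m.factorial) := by
      push_cast [Nat.factorial_succ]; ring
    rw [h2]
    have hpos : 0 ≤ Real.Gamma x * m.factorial := by
      have := Real.Gamma_pos_of_pos (lt_of_lt_of_le one_pos hx)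
      positivity
    calc ((m:ℝ)+1) * (Real.Gamma x * m.factorial) ≤ ((m:ℝ)+1) * Real.Gamma (x+m) := by
          apply mul_le_mul_of_nonneg_left ih (by positivity)
      _ ≤ (x + m) * Real.Gamma (x+m) := by
          apply mul_le_mul_of_nonneg_right (by linarith) (Real.Gamma_pos_of_pos hxm).le

/-- Normalized Bessel-type series. -/
noncomputable def gb (c ν : ℝ) : ℝ :=
  ∑' k : ℕ, (-1 : ℝ) ^ k * c ^ k / (k.factorial * Real.Gamma (ν + k + 1))

lemma gb_term_abs_summable (c ν : ℝ) :
    Summable (fun k : ℕ => |(-1 : ℝ) ^ k * c ^ k / (k.factorial * Real.Gamma (ν + k + 1))|) := by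
  set f : ℕ → ℝ := fun k => |(-1 : ℝ) ^ k * c ^ k / (k.factorial * Real.Gamma (ν + k + 1))|
  -- choose k0 so that ν + k0 + 1 ≥ 1
  obtain ⟨k0, hk0⟩ : ∃ k0 : ℕ, 0 ≤ ν + k0 := ⟨⌈-ν⌉₊, by
    have := Nat.le_ceil (-ν); linarith [Nat.le_ceil (-ν)]⟩
  rw [← summable_nat_add_iff k0]
  have hG : (0:ℝ) < Real.Gamma (ν + k0 + 1) :=
    Real.Gamma_pos_of_pos (by linarith)
  apply Summable.of_nonneg_of_le
    (f := fun k => (1 / Real.Gamma (ν + k0 + 1)) * (|c| ^ (k + k0) / k.factorial))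
    (fun k => abs_nonneg _)
  · intro k
    have harg : ν + ((k + k0 : ℕ) : ℝ) + 1 = (ν + k0 + 1) + k := by push_cast; ring
    have hGk : Real.Gamma (ν + k0 + 1) * k.factorial ≤ Real.Gamma ((ν + k0 + 1) + k) :=
      Gamma_mul_factorial_le _ (by linarith) k
    have hGkpos : (0:ℝ) < Real.Gamma ((ν + k0 + 1) + k) :=
      lt_of_lt_of_le (by positivity) hGk
    have hfac : (1:ℝ) ≤ (k.factorial : ℝ) := by exact_mod_cast Nat.one_le_iff_ne_zero.mpr k.factorial_ne_zero
    have hfacle : ((k.factorial : ℝ)) ≤ ((k+k0).factorial : ℝ) := by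
      exact_mod_cast Nat.factorial_le (Nat.le_add_right k k0)
    rw [harg]
    rw [abs_div, abs_mul, abs_pow, abs_pow, abs_neg, abs_one, one_pow, one_mul]
    rw [abs_of_pos (by positivity : (0:ℝ) < ((k+k0).factorial : ℝ) * Real.Gamma ((ν + k0 + 1) + k))]
    have key : Real.Gamma (ν + k0 + 1) * k.factorial ≤ ((k+k0).factorial : ℝ) * Real.Gamma (ν + k0 + 1 + ↑k) := by
      nlinarith [hGk, hfacle, hfac, hG, hGkpos]
    calc |c| ^ (k+k0) / (((k+k0).factorial : ℝ) * Real.Gamma (ν + k0 + 1 + ↑k))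
        ≤ |c| ^ (k+k0) / (Real.Gamma (ν + k0 + 1) * k.factorial) := by
          apply div_le_div_of_nonneg_left (by positivity) (by positivity) key
      _ = 1 / Real.Gamma (ν + k0 + 1) * (|c| ^ (k + k0) / ↑k.factorial) := by
          field_simp
  · apply Summable.mul_left
    have : Summable (fun k : ℕ => |c| ^ k / k.factorial) := Real.summable_pow_div_factorial |c|
    simpa [pow_add, mul_div_assoc, mul_comm, mul_left_comm] using this.mul_right (|c| ^ k0)

lemma gb_summable (c ν : ℝ) :
    Summable (fun k : ℕ => (-1 : ℝ) ^ k * c ^ k / (k.factorial * Real.Gamma (ν + k + 1))) :=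
  (gb_term_abs_summable c ν).of_abs

/-- The three-term recurrence. -/
lemma gb_rec (c ν : ℝ) : gb c ν = (ν + 1) * gb c (ν + 1) - c * gb c (ν + 2) := by
  have s0 := gb_summable c ν
  have s1 := gb_summable c (ν + 1)
  have s2 := gb_summable c (ν + 2)
  set d : ℕ → ℝ := fun k =>
    (-1 : ℝ) ^ k * c ^ k / (k.factorial * Real.Gamma (ν + k + 1)) -
      (ν + 1) * ((-1 : ℝ) ^ k * c ^ k / (k.factorial * Real.Gamma (ν + 1 + k + 1))) with hd
  have hsd : Summable d := s0.sub (s1.mul_left (ν + 1))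
  have hdk : ∀ k : ℕ, d k = (-1 : ℝ) ^ k * c ^ k * k / (k.factorial * Real.Gamma (ν + k + 2)) := by
    intro k
    have hg : 1 / Real.Gamma (ν + k + 1) = (ν + k + 1) / Real.Gamma (ν + k + 2) := by
      have := one_div_Gamma_eq (ν + k + 1)
      rwa [show ν + (k:ℝ) + 1 + 1 = ν + k + 2 by ring] at this
    have e0 : (-1 : ℝ) ^ k * c ^ k / (k.factorial * Real.Gamma (ν + k + 1)) =
        ((-1 : ℝ) ^ k * c ^ k / k.factorial) * (1 / Real.Gamma (ν + k + 1)) := by ring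
    have e1 : ν + 1 + (k:ℝ) + 1 = ν + k + 2 := by ring
    rw [hd]
    simp only [e1]
    rw [e0, hg]
    ring
  have hmain : gb c ν - (ν + 1) * gb c (ν + 1) = - (c * gb c (ν + 2)) := by
    have h1 : gb c ν - (ν + 1) * gb c (ν + 1) = ∑' k, d k := by
      rw [gb, gb, ← tsum_mul_left]
      exact (Summable.tsum_sub s0 (s1.mul_left (ν + 1))).symm
    rw [h1, Summable.tsum_eq_zero_add hsd]
    have h0 : d 0 = 0 := by rw [hdk 0]; simp
    have hshift : ∀ k : ℕ, d (k + 1) =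
        -c * ((-1 : ℝ) ^ k * c ^ k / (k.factorial * Real.Gamma (ν + 2 + k + 1))) := by
      intro k
      rw [hdk (k + 1)]
      have e2 : ν + ((k+1:ℕ):ℝ) + 2 = ν + 2 + k + 1 := by push_cast; ring
      rw [e2]
      rw [show (((k+1).factorial : ℕ):ℝ) = ((k:ℝ)+1) * k.factorial from by
        push_cast [Nat.factorial_succ]; ring]
      rw [show ((-1:ℝ)^(k+1) * c^(k+1) * ((k+1:ℕ):ℝ)) = ((k:ℝ)+1) * (-c * ((-1:ℝ)^k * c^k)) from by
        push_cast; ring]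
      rw [show ((k:ℝ)+1) * (k.factorial:ℝ) * Real.Gamma (ν+2+k+1)
          = ((k:ℝ)+1) * ((k.factorial:ℝ) * Real.Gamma (ν+2+k+1)) from by ring]
      rw [mul_div_mul_left _ _ (by positivity : ((k:ℝ)+1) ≠ 0)]
      rw [mul_div_assoc]
    rw [h0, zero_add]
    calc ∑' k, d (k + 1)
        = ∑' k : ℕ, -c * ((-1 : ℝ) ^ k * c ^ k / (k.factorial * Real.Gamma (ν + 2 + k + 1))) := by
          exact tsum_congr hshift
      _ = -c * gb c (ν + 2) := by rw [tsum_mul_left]; rfl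
      _ = - (c * gb c (ν + 2)) := by ring
  linarith [hmain]

lemma gb_bound (c ν : ℝ) (hc : 0 ≤ c) (hν : 0 ≤ ν) :
    |gb c ν| ≤ (∑' k : ℕ, c ^ k / k.factorial) / Real.Gamma (ν + 1) := by
  have hG1 : (0:ℝ) < Real.Gamma (ν + 1) := Real.Gamma_pos_of_pos (by linarith)
  have habs : |gb c ν| ≤ ∑' k : ℕ, |(-1 : ℝ) ^ k * c ^ k / (k.factorial * Real.Gamma (ν + k + 1))| := by
    simpa only [Real.norm_eq_abs, gb] using norm_tsum_le_tsum_norm (f := fun k : ℕ =>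
      (-1 : ℝ) ^ k * c ^ k / (k.factorial * Real.Gamma (ν + k + 1)))
      (by simpa only [Real.norm_eq_abs] using gb_term_abs_summable c ν)
  refine habs.trans ?_
  have hsum2 : Summable (fun k : ℕ => c ^ k / k.factorial * (Real.Gamma (ν + 1))⁻¹) :=
    (Real.summable_pow_div_factorial c).mul_right _
  have hle : ∀ k : ℕ, |(-1 : ℝ) ^ k * c ^ k / (k.factorial * Real.Gamma (ν + k + 1))|
      ≤ c ^ k / k.factorial * (Real.Gamma (ν + 1))⁻¹ := by
    intro k
    have hGk : Real.Gamma (ν + 1) * k.factorial ≤ Real.Gamma (ν + 1 + k) := by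
      exact Gamma_mul_factorial_le _ (by linarith) k
    have harg : ν + (k:ℝ) + 1 = ν + 1 + k := by ring
    have hGkpos : (0:ℝ) < Real.Gamma (ν + 1 + k) := lt_of_lt_of_le (by positivity) hGk
    rw [abs_div, abs_mul, abs_pow, abs_pow, abs_neg, abs_one, one_pow, one_mul,
      abs_of_nonneg hc, harg, abs_of_pos (by positivity : (0:ℝ) < (k.factorial : ℝ) * Real.Gamma (ν + 1 + k))]
    rw [div_le_iff₀ (by positivity)]
    have hfac1 : (1:ℝ) ≤ (k.factorial : ℝ) := by
      exact_mod_cast Nat.one_le_iff_ne_zero.mpr k.factorial_ne_zero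
    have key : (k.factorial : ℝ) * Real.Gamma (ν + 1) ≤ (k.factorial : ℝ) * Real.Gamma (ν + 1 + k) := by
      nlinarith [hGk, hfac1, hG1]
    calc c ^ k = c ^ k / ((k.factorial:ℝ) * Real.Gamma (ν + 1)) * ((k.factorial:ℝ) * Real.Gamma (ν + 1)) := by
          field_simp
      _ ≤ c ^ k / ((k.factorial:ℝ) * Real.Gamma (ν + 1)) * ((k.factorial:ℝ) * Real.Gamma (ν + 1 + k)) := by
          apply mul_le_mul_of_nonneg_left _ (by positivity)
          nlinarith [hGk, hG1, hfac1]
      _ = c ^ k / ↑k.factorial * (Real.Gamma (ν + 1))⁻¹ * (↑k.factorial * Real.Gamma (ν + 1 + ↑k)) := by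
          field_simp
  calc (∑' k : ℕ, |(-1 : ℝ) ^ k * c ^ k / (k.factorial * Real.Gamma (ν + k + 1))|)
      ≤ ∑' k : ℕ, c ^ k / k.factorial * (Real.Gamma (ν + 1))⁻¹ :=
        Summable.tsum_le_tsum hle (gb_term_abs_summable c ν) hsum2
    _ = (∑' k : ℕ, c ^ k / k.factorial) / Real.Gamma (ν + 1) := by
        rw [tsum_mul_right, div_eq_mul_inv]

/-- The Bessel function of the first kind of order `ν`, for `r > 0`:
`J_ν(r) = ∑_{k=0}^∞ ((-1)^k / (k! Γ(ν+k+1))) (r/2)^(ν+2k)`. -/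
noncomputable def besselJ (ν r : ℝ) : ℝ :=
  ∑' k : ℕ, ((-1 : ℝ) ^ k / (k.factorial * Real.Gamma (ν + k + 1))) *
    (r / 2) ^ (ν + 2 * (k : ℝ))

lemma besselJ_eq_gb (ν r : ℝ) (hr : 0 < r) :
    besselJ ν r = (r / 2) ^ ν * gb ((r / 2) ^ 2) ν := by
  have h2 : (0:ℝ) < r / 2 := by linarith
  rw [besselJ, gb, ← tsum_mul_left]
  apply tsum_congr
  intro k
  have hpow : (r / 2) ^ (ν + 2 * (k : ℝ)) = (r / 2) ^ ν * ((r / 2) ^ 2) ^ k := by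
    rw [Real.rpow_add h2]
    congr 1
    rw [show (2 : ℝ) * (k : ℝ) = ((2 * k : ℕ) : ℝ) by push_cast; ring,
      Real.rpow_natCast, pow_mul]
  rw [hpow]
  ring

/-- Rational recurrence sequence mirroring `gb c (s+n) / gb c s`. -/
def Qseq (s cq q1 : ℚ) : ℕ → ℚ
  | 0 => 1
  | 1 => q1
  | (n+2) => ((s + n + 1) * Qseq s cq q1 (n+1) - Qseq s cq q1 n) / cq

theorem besselJ_ratio_irrational (s : ℚ) (r : ℝ) (hr : 0 < r)
    (hq : ∃ q : ℚ, r ^ 2 = (q : ℝ)) (hJ : besselJ (s : ℝ) r ≠ 0) :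
    Irrational (r * besselJ ((s : ℝ) + 1) r / besselJ (s : ℝ) r) := by
  obtain ⟨q, hqr⟩ := hq
  -- the parameter c = (r/2)^2 is rational
  set cq : ℚ := q / 4 with hcq
  set c : ℝ := (r / 2) ^ 2 with hcdef
  have h2 : (0:ℝ) < r / 2 := by linarith
  have hc0 : 0 < c := by positivity
  have hcrat : c = (cq : ℝ) := by
    rw [hcdef, hcq]; push_cast; rw [← hqr]; ring
  have hcq0 : cq ≠ 0 := by
    intro h; rw [h] at hcrat; simp at hcrat; exact absurd hcrat hc0.ne'
  -- express besselJ through gb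
  have hJs : besselJ (s : ℝ) r = (r / 2) ^ (s:ℝ) * gb c (s:ℝ) := besselJ_eq_gb _ r hr
  have hJs1 : besselJ ((s : ℝ) + 1) r = (r / 2) ^ ((s:ℝ)+1) * gb c ((s:ℝ)+1) :=
    besselJ_eq_gb _ r hr
  have hrpow : (0:ℝ) < (r / 2) ^ (s:ℝ) := Real.rpow_pos_of_pos h2 _
  have hgs : gb c (s:ℝ) ≠ 0 := by
    intro h; apply hJ; rw [hJs, h, mul_zero]
  -- suppose the ratio is rational
  rintro ⟨x, hx⟩
  -- ratio equals 2*c*gb(s+1)/gb(s)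
  have hratio : (x:ℝ) = 2 * c * gb c ((s:ℝ)+1) / gb c (s:ℝ) := by
    rw [hx, hJs, hJs1, Real.rpow_add h2, Real.rpow_one]
    field_simp
    ring
  set q1 : ℚ := x / (2 * cq) with hq1def
  have hgbs1 : gb c ((s:ℝ)+1) = (q1:ℝ) * gb c (s:ℝ) := by
    have h2c : (2:ℝ) * c ≠ 0 := by positivity
    have : (q1:ℝ) = (x:ℝ) / (2*c) := by rw [hq1def]; push_cast; rw [hcrat]
    rw [this, hratio]
    field_simp
  set Q : ℕ → ℚ := Qseq s cq q1 with hQ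
  set G : ℝ := gb c (s:ℝ) with hGdef
  have hcqR : ((cq:ℚ):ℝ) ≠ 0 := by exact_mod_cast hcq0
  have hcne : c ≠ 0 := hc0.ne'
  -- Claim A : gb c (s+n) = Q n * gb c s
  have keyA : ∀ n : ℕ, gb c ((s:ℝ) + n) = (Q n : ℝ) * G ∧
      gb c ((s:ℝ) + n + 1) = (Q (n+1) : ℝ) * G := by
    intro n
    induction n with
    | zero =>
      constructor
      · simp [hQ, Qseq, hGdef]
      · have : Q 1 = q1 := rfl
        rw [this]
        simpa using hgbs1
    | succ n ih =>
      have g1 : gb c ((s:ℝ) + ((n+1:ℕ):ℝ)) = (Q (n+1) : ℝ) * G := by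
        push_cast
        rw [← add_assoc]
        exact_mod_cast ih.2
      refine ⟨g1, ?_⟩
      have hrec := gb_rec c ((s:ℝ) + n)
      have hQn2 : (Q (n+2) : ℝ) = (((s:ℝ) + n + 1) * (Q (n+1):ℝ) - (Q n : ℝ)) / (cq:ℝ) := by
        rw [hQ]
        show ((Qseq s cq q1 (n+2) : ℚ) : ℝ) = _
        rw [Qseq]
        push_cast
        ring_nf
      have e2 : (s:ℝ) + ((n+1:ℕ):ℝ) + 1 = (s:ℝ) + (n:ℝ) + 1 + 1 := by push_cast; ring
      rw [e2]
      have : gb c ((s:ℝ) + n + 1 + 1) =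
          (((s:ℝ) + n + 1) * gb c ((s:ℝ) + n + 1) - gb c ((s:ℝ) + n)) / c := by
        rw [eq_div_iff hcne]
        have e3 : (s:ℝ) + n + 1 + 1 = (s:ℝ) + n + 2 := by ring
        rw [e3]
        linarith [hrec]
      rw [this, ih.1, ih.2, hQn2, ← hcrat]
      field_simp
  have hA : ∀ n : ℕ, gb c ((s:ℝ) + n) = (Q n : ℝ) * G := fun n => (keyA n).1
  -- Claim B : no two consecutive zeros
  have hB : ∀ n : ℕ, Q n ≠ 0 ∨ Q (n+1) ≠ 0 := by
    intro n
    induction n with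
    | zero => left; simp [hQ, Qseq]
    | succ n ih =>
      by_contra hcon
      push_neg at hcon
      obtain ⟨h1, h2⟩ := hcon
      have hrecQ : Q (n+2) = ((s + n + 1) * Q (n+1) - Q n) / cq := rfl
      rw [h1, h2] at hrecQ
      rw [eq_comm, div_eq_iff hcq0] at hrecQ
      have hQn : Q n = 0 := by linarith [hrecQ]
      rcases ih with h | h
      · exact h hQn
      · exact h h1
  -- Claim C : denominators of Q n divide D * L^n
  set a : ℤ := s.num with ha
  set b : ℤ := (s.den : ℤ) with hb
  set u : ℤ := cq.num with hu
  set v : ℤ := (cq.den : ℤ) with hv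
  set L : ℤ := b * u with hL
  set D : ℤ := (q1.den : ℤ) with hD
  have hbq : ((s.den : ℚ)) ≠ 0 := by exact_mod_cast s.den_nz
  have hu0 : u ≠ 0 := Rat.num_ne_zero.mpr hcq0
  have hb0 : b ≠ 0 := by rw [hb]; exact_mod_cast s.den_nz
  have hL0 : L ≠ 0 := mul_ne_zero hb0 hu0
  have hD0 : 0 < D := by rw [hD]; exact_mod_cast q1.pos
  have hs : s * (b:ℚ) = (a:ℚ) := by rw [ha, hb]; push_cast; exact Rat.mul_den_eq_num s
  have hcqv : cq * (v:ℚ) = (u:ℚ) := by rw [hu, hv]; push_cast; exact Rat.mul_den_eq_num cq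
  have hkeyC : ∀ n : ℕ, (L:ℚ) * Q (n+2) = (v:ℚ) * (((a:ℚ) + (n+1) * b) * Q (n+1) - b * Q n) := by
    intro n
    have hrecQ : Q (n+2) = ((s + n + 1) * Q (n+1) - Q n) / cq := rfl
    rw [hrecQ, hL]
    push_cast
    rw [← hs, ← hcqv]
    field_simp
    ring
  have hC : ∀ n : ℕ, (∃ m : ℤ, (D:ℚ) * (L:ℚ)^n * Q n = (m:ℚ)) ∧
      (∃ m : ℤ, (D:ℚ) * (L:ℚ)^(n+1) * Q (n+1) = (m:ℚ)) := by
    intro n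
    induction n with
    | zero =>
      constructor
      · exact ⟨D, by simp [hQ, Qseq]⟩
      · refine ⟨L * q1.num, ?_⟩
        have h1 : Q 1 = q1 := rfl
        have h2 := Rat.mul_den_eq_num q1
        rw [h1]
        push_cast
        rw [hD]
        push_cast
        linear_combination (L:ℚ) * h2
    | succ n ih =>
      obtain ⟨m0, hm0⟩ := ih.1
      obtain ⟨m1, hm1⟩ := ih.2
      refine ⟨⟨m1, hm1⟩, ⟨v * (a + (n+1) * b) * m1 - v * b * L * m0, ?_⟩⟩
      have hk := hkeyC n
      push_cast
      linear_combination (D:ℚ) * (L:ℚ)^(n+1) * hk + ((v:ℚ) * ((a:ℚ) + (n+1) * (b:ℚ))) * hm1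
        - (v:ℚ) * (b:ℚ) * (L:ℚ) * hm0
  -- Final contradiction via decay of gb versus denominator growth
  set E : ℝ := ∑' k : ℕ, c ^ k / k.factorial with hE
  have hEsum : Summable (fun k : ℕ => c ^ k / (k.factorial : ℝ)) :=
    Real.summable_pow_div_factorial c
  have hE1 : (1:ℝ) ≤ E := by
    have h0 := Summable.le_tsum hEsum 0 (fun j _ => by positivity)
    simpa using h0
  set n0 : ℕ := ⌈-s⌉₊ with hn0def
  have hn0 : (0:ℝ) ≤ (s:ℝ) + n0 := by
    have h1 : (-s : ℚ) ≤ (n0 : ℚ) := Nat.le_ceil (-s)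
    have : (0:ℚ) ≤ s + n0 := by linarith
    exact_mod_cast this
  set Γ0 : ℝ := Real.Gamma ((s:ℝ) + n0 + 1) with hΓ0def
  have hΓ0 : 0 < Γ0 := Real.Gamma_pos_of_pos (by linarith)
  have hGabs : 0 < |G| := abs_pos.mpr hgs
  set LR : ℝ := |(L:ℝ)| with hLRdef
  have hLR1 : (1:ℝ) ≤ LR := by
    rw [hLRdef, ← Int.cast_abs]
    exact_mod_cast Int.one_le_abs hL0
  have hLR0 : (0:ℝ) < LR := lt_of_lt_of_le one_pos hLR1
  set A0 : ℝ := (D:ℝ) * E * LR ^ n0 / (Γ0 * |G|) with hA0def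
  have hDR : (0:ℝ) < (D:ℝ) := by exact_mod_cast hD0
  have hA0pos : 0 < A0 := by rw [hA0def]; positivity
  -- upper bound
  have hub : ∀ m : ℕ, |(Q (m + n0) : ℝ)| * |G| * (Γ0 * m.factorial) ≤ E := by
    intro m
    have hn : (0:ℝ) ≤ (s:ℝ) + (m + n0 : ℕ) := by push_cast; linarith [Nat.cast_nonneg (α := ℝ) m]
    have hbd := gb_bound c ((s:ℝ) + (m + n0 : ℕ)) hc0.le hn
    rw [hA (m + n0), abs_mul] at hbd
    have harg : (s:ℝ) + ((m + n0 : ℕ) : ℝ) + 1 = ((s:ℝ) + n0 + 1) + m := by push_cast; ring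
    rw [harg] at hbd
    have hfg : Γ0 * (m.factorial : ℝ) ≤ Real.Gamma (((s:ℝ) + n0 + 1) + m) :=
      Gamma_mul_factorial_le _ (by linarith) m
    have hfgpos : (0:ℝ) < Γ0 * (m.factorial : ℝ) := by positivity
    have hGpos : (0:ℝ) < Real.Gamma (((s:ℝ) + n0 + 1) + m) := lt_of_lt_of_le hfgpos hfg
    have hE0 : (0:ℝ) ≤ E := by linarith
    have hbd2 : |(Q (m + n0) : ℝ)| * |G| ≤ E / (Γ0 * m.factorial) :=
      hbd.trans (div_le_div_of_nonneg_left hE0 hfgpos hfg)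
    rw [le_div_iff₀ hfgpos] at hbd2
    linarith [hbd2]
  -- lower bound
  have hlb : ∀ n : ℕ, Q n ≠ 0 → (1:ℝ) ≤ (D:ℝ) * LR ^ n * |(Q n : ℝ)| := by
    intro n hQn
    obtain ⟨m, hm⟩ : ∃ m : ℤ, (D:ℚ) * (L:ℚ)^n * Q n = (m:ℚ) := by
      cases n with
      | zero => exact (hC 0).1
      | succ k => exact (hC k).2
    have hm0 : m ≠ 0 := by
      intro h
      rw [h] at hm
      push_cast at hm
      have hDq : (D:ℚ) ≠ 0 := by exact_mod_cast hD0.ne'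
      have hLq : (L:ℚ) ≠ 0 := by exact_mod_cast hL0
      rcases mul_eq_zero.mp hm with h' | h'
      · rcases mul_eq_zero.mp h' with h'' | h''
        · exact hDq h''
        · exact hLq ((pow_eq_zero_iff'.mp h'').1)
      · exact hQn h'
    have hmR : (D:ℝ) * (L:ℝ)^n * (Q n : ℝ) = (m:ℝ) := by exact_mod_cast hm
    have h1m : (1:ℝ) ≤ |(m:ℝ)| := by
      rw [← Int.cast_abs]
      exact_mod_cast Int.one_le_abs hm0
    calc (1:ℝ) ≤ |(m:ℝ)| := h1m
      _ = |(D:ℝ) * (L:ℝ)^n * (Q n : ℝ)| := by rw [hmR]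
      _ = (D:ℝ) * LR^n * |(Q n : ℝ)| := by
          rw [abs_mul, abs_mul, abs_pow, abs_of_pos hDR, hLRdef]
  -- choose m large enough
  have htend := FloorSemiring.tendsto_pow_div_factorial_atTop (K := ℝ) LR
  have hev : ∀ᶠ m : ℕ in Filter.atTop, LR ^ m / m.factorial < 1 / A0 :=
    htend.eventually_lt_const (by positivity)
  obtain ⟨N, hN⟩ := Filter.eventually_atTop.mp hev
  have hkill : ∀ m : ℕ, N ≤ m → Q (m + n0) ≠ 0 → False := by
    intro m hm hQne
    have h1 := hub m
    have h2 := hlb (m + n0) hQne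
    have h3 := hN m hm
    have hfm : (0:ℝ) < (m.factorial : ℝ) := by positivity
    rw [div_lt_div_iff₀ hfm hA0pos] at h3
    have hpowpos : (0:ℝ) < (D:ℝ) * LR ^ (m + n0) := mul_pos hDR (pow_pos hLR0 _)
    have t1 := mul_le_mul_of_nonneg_left h1 hpowpos.le
    have t2 := mul_le_mul_of_nonneg_right h2 (le_of_lt (mul_pos hGabs (mul_pos hΓ0 hfm)))
    have e1 : ((D:ℝ) * LR ^ (m + n0) * |(Q (m+n0) : ℝ)|) * (|G| * (Γ0 * m.factorial))
        = (D:ℝ) * LR ^ (m + n0) * (|(Q (m+n0) : ℝ)| * |G| * (Γ0 * m.factorial)) := by ring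
    have h4 : |G| * (Γ0 * m.factorial) ≤ (D:ℝ) * LR ^ (m + n0) * E := by
      linarith [t1, t2, e1.le, e1.ge]
    have h5 : (D:ℝ) * LR ^ (m + n0) * E = LR ^ m * A0 * (Γ0 * |G|) := by
      rw [hA0def, pow_add]
      field_simp
    rw [h5] at h4
    have t3 := mul_lt_mul_of_pos_right h3 (mul_pos hΓ0 hGabs)
    have e2 : 1 * (m.factorial : ℝ) * (Γ0 * |G|) = |G| * (Γ0 * m.factorial) := by ring
    linarith [h4, t3, e2.le, e2.ge]
  rcases hB (N + n0) with h | h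
  · exact hkill N le_rfl h
  · refine hkill (N + 1) (Nat.le_succ N) ?_
    rw [show N + 1 + n0 = N + n0 + 1 from by omega]
    exact h
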